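/- Assume λ > 0 and that the vectors k(z^p_1), …, k(z^p_{n_p}), k(z^q_1), …, k(z^q_{n_q}) are linearly independent in H. Then with β* = (1/(λ n_q)) 𝟙 and α* = −(1/(λ n_p n_q)) ((1/n_p) K_p + λ I)⁻¹ K_{pq} 𝟙, the element r̂* = Σ_{i=1}^{n_p} α*_i k(z^p_i) + Σ_{j=1}^{n_q} β*_j k(z^q_j) is the unique global minimizer of F_λ over H, i.e., F_λ(r̂*) < F_λ(f) for every f ∈ H with f ≠ r̂*. -/

import Mathlib

open Matrix

/-- Assume `λ > 0` and that the sample feature vectors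
`k (zp 1), …, k (zp n_p), k (zq 1), …, k (zq n_q)` are linearly independent in
`H`.  Then with `β* = (1/(λ n_q)) 𝟙` and
`α* = −(1/(λ n_p n_q)) ((1/n_p) K_p + λ I)⁻¹ K_{pq} 𝟙`, the element
`r̂* = ∑ i, α*_i • k (zp i) + ∑ j, β*_j • k (zq j)` is the unique global minimizer
of `F` over `H`: `F r̂* < F f` for every `f ≠ r̂*`. -/
theorem stmt_7
    {H : Type*} [NormedAddCommGroup H] [InnerProductSpace ℝ H]
    {Z : Type*} (k : Z → H)
    (np nq : ℕ) (hnp : 1 ≤ np) (hnq : 1 ≤ nq)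
    (zp : Fin np → Z) (zq : Fin nq → Z)
    (lam : ℝ) (hlam : 0 < lam)
    (hind : LinearIndependent ℝ
      (Sum.elim (fun i : Fin np => k (zp i)) (fun j : Fin nq => k (zq j))))
    (J F : H → ℝ)
    (hJ : ∀ f : H, J f = (1 / (2 * (np : ℝ))) * ∑ i, (inner ℝ f (k (zp i)) : ℝ) ^ 2
        - (1 / (nq : ℝ)) * ∑ j, (inner ℝ f (k (zq j)) : ℝ))
    (hF : ∀ f : H, F f = J f + (lam / 2) * ‖f‖ ^ 2)
    (Kp : Matrix (Fin np) (Fin np) ℝ)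
    (hKp : ∀ i i', Kp i i' = (inner ℝ (k (zp i)) (k (zp i')) : ℝ))
    (Kpq : Matrix (Fin np) (Fin nq) ℝ)
    (hKpq : ∀ i j, Kpq i j = (inner ℝ (k (zp i)) (k (zq j)) : ℝ))
    (βs : Fin nq → ℝ)
    (hβ : βs = (1 / (lam * (nq : ℝ))) • (1 : Fin nq → ℝ))
    (αs : Fin np → ℝ)
    (hα : αs = -((1 / (lam * (np : ℝ) * (nq : ℝ))) •
      (((1 / (np : ℝ)) • Kp + lam • (1 : Matrix (Fin np) (Fin np) ℝ))⁻¹ *ᵥ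
        (Kpq *ᵥ (1 : Fin nq → ℝ)))))
    (rstar : H)
    (hrstar : rstar = ∑ i, αs i • k (zp i) + ∑ j, βs j • k (zq j)) :
    ∀ f : H, f ≠ rstar → F rstar < F f := by
  have hnp0 : (0:ℝ) < (np:ℝ) := by exact_mod_cast hnp
  have hnq0 : (0:ℝ) < (nq:ℝ) := by exact_mod_cast hnq
  set M : Matrix (Fin np) (Fin np) ℝ :=
    (1 / (np : ℝ)) • Kp + lam • (1 : Matrix (Fin np) (Fin np) ℝ) with hM
  -- Gram quadratic form
  have hgram : ∀ x : Fin np → ℝ,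
      dotProduct x (Kp *ᵥ x) = ‖∑ i, x i • k (zp i)‖ ^ 2 := by
    intro x
    rw [← real_inner_self_eq_norm_sq]
    rw [inner_sum]
    simp only [sum_inner, inner_smul_left, inner_smul_right, RCLike.star_def, conj_trivial]
    rw [dotProduct]
    refine Finset.sum_congr rfl fun i _ => ?_
    rw [mulVec, dotProduct, Finset.mul_sum, Finset.mul_sum]
    refine Finset.sum_congr rfl fun i' _ => ?_
    rw [hKp, real_inner_comm]
    ring
  -- M is positive definite
  have hMpd : M.PosDef := by
    refine Matrix.PosDef.of_dotProduct_mulVec_pos ?_ ?_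
    · show Mᴴ = M
      ext i i'
      simp only [hM, Matrix.conjTranspose_apply, Matrix.add_apply, Matrix.smul_apply,
        smul_eq_mul, star_trivial, Matrix.one_apply, hKp]
      rw [real_inner_comm]
      by_cases h : i' = i
      · subst h; simp
      · rw [if_neg h, if_neg (fun hh => h hh.symm)]
    · intro x hx
      have hx2 : (0:ℝ) < dotProduct x x := by
        have : dotProduct x x = ∑ i, (x i)^2 := by
          simp [dotProduct, sq]
        rw [this]
        rcases Function.ne_iff.1 hx with ⟨i, hi⟩
        exact Finset.sum_pos' (fun j _ => sq_nonneg _)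
          ⟨i, Finset.mem_univ i, lt_of_le_of_ne (sq_nonneg _) (Ne.symm (pow_ne_zero 2 hi))⟩
      have h1 : dotProduct x (Kp *ᵥ x) ≥ 0 := by
        rw [hgram]; positivity
      have : dotProduct (star x) (M *ᵥ x)
          = (1 / (np:ℝ)) * dotProduct x (Kp *ᵥ x) + lam * dotProduct x x := by
        simp only [hM, star_trivial, add_mulVec, smul_mulVec, one_mulVec,
          dotProduct_add, dotProduct_smul, smul_eq_mul]
      rw [this]
      have : 0 < lam * dotProduct x x := by positivity
      have h2 : 0 ≤ (1 / (np:ℝ)) * dotProduct x (Kp *ᵥ x) := by positivity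
      linarith
  have hMinv : M * M⁻¹ = 1 :=
    Matrix.mul_nonsing_inv _ hMpd.det_pos.ne'.isUnit
  -- stationarity: ((1/np) Kp + lam I) αs + (1/np) Kpq βs = 0
  have hstat : ∀ i, (1 / (np:ℝ)) * ((Kp *ᵥ αs) i + (Kpq *ᵥ βs) i) + lam * αs i = 0 := by
    have key : M *ᵥ αs = -((1 / (lam * (np : ℝ) * (nq : ℝ))) • (Kpq *ᵥ (1 : Fin nq → ℝ))) := by
      rw [hα]
      rw [Matrix.mulVec_neg, Matrix.mulVec_smul, Matrix.mulVec_mulVec, hMinv, Matrix.one_mulVec]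
    intro i
    have hk : (M *ᵥ αs) i = (1 / (np:ℝ)) * (Kp *ᵥ αs) i + lam * αs i := by
      simp [hM, add_mulVec, smul_mulVec, one_mulVec]
    have hb : (Kpq *ᵥ βs) i = (1 / (lam * (nq:ℝ))) * (Kpq *ᵥ (1 : Fin nq → ℝ)) i := by
      rw [hβ, Matrix.mulVec_smul]; simp
    have hkey := congrFun key i
    rw [hk] at hkey
    simp only [Pi.neg_apply, Pi.smul_apply, smul_eq_mul] at hkey
    rw [hb]
    linear_combination hkey
  -- inner ℝ products of rstar with kp i
  have ha : ∀ i, (inner ℝ rstar (k (zp i)) : ℝ) = (Kp *ᵥ αs) i + (Kpq *ᵥ βs) i := by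
    intro i
    rw [hrstar, inner_add_left, sum_inner, sum_inner]
    simp only [inner_smul_left, RCLike.star_def, conj_trivial]
    congr 1
    · rw [mulVec, dotProduct]
      refine Finset.sum_congr rfl fun i' _ => ?_
      rw [hKp, real_inner_comm]
      ring
    · rw [mulVec, dotProduct]
      refine Finset.sum_congr rfl fun j _ => ?_
      rw [hKpq, real_inner_comm]
      ring
  -- coefficient for q side vanishes
  have hcoefq : ∀ j, lam * βs j - 1 / (nq:ℝ) = 0 := by
    intro j
    rw [hβ]
    simp only [Pi.smul_apply, Pi.one_apply, smul_eq_mul, mul_one]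
    field_simp
    ring
  -- first-order condition: linear term vanishes for every direction g
  have hL : ∀ g : H,
      (1 / (np:ℝ)) * ∑ i, (inner ℝ rstar (k (zp i)) : ℝ) * (inner ℝ g (k (zp i)) : ℝ)
      - (1 / (nq:ℝ)) * ∑ j, (inner ℝ g (k (zq j)) : ℝ)
      + lam * (inner ℝ rstar g : ℝ) = 0 := by
    intro g
    have hrg : (inner ℝ rstar g : ℝ)
        = ∑ i, αs i * (inner ℝ g (k (zp i)) : ℝ) + ∑ j, βs j * (inner ℝ g (k (zq j)) : ℝ) := by
      rw [hrstar, inner_add_left, sum_inner, sum_inner]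
      congr 1 <;> refine Finset.sum_congr rfl fun x _ => ?_ <;>
        · simp only [inner_smul_left, RCLike.star_def, conj_trivial]
          rw [real_inner_comm]
    rw [hrg]
    have e1 : (1 / (np:ℝ)) * ∑ i, (inner ℝ rstar (k (zp i)) : ℝ) * (inner ℝ g (k (zp i)) : ℝ)
        + lam * ∑ i, αs i * (inner ℝ g (k (zp i)) : ℝ)
        = ∑ i, ((1 / (np:ℝ)) * ((Kp *ᵥ αs) i + (Kpq *ᵥ βs) i) + lam * αs i)
            * (inner ℝ g (k (zp i)) : ℝ) := by
      rw [Finset.mul_sum, Finset.mul_sum, ← Finset.sum_add_distrib]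
      refine Finset.sum_congr rfl fun i _ => ?_
      rw [ha i]; ring
    have e2 : lam * ∑ j, βs j * (inner ℝ g (k (zq j)) : ℝ)
        - (1 / (nq:ℝ)) * ∑ j, (inner ℝ g (k (zq j)) : ℝ)
        = ∑ j, (lam * βs j - 1 / (nq:ℝ)) * (inner ℝ g (k (zq j)) : ℝ) := by
      rw [Finset.mul_sum, Finset.mul_sum, ← Finset.sum_sub_distrib]
      refine Finset.sum_congr rfl fun j _ => ?_
      ring
    have : (1 / (np:ℝ)) * ∑ i, (inner ℝ rstar (k (zp i)) : ℝ) * (inner ℝ g (k (zp i)) : ℝ)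
        - (1 / (nq:ℝ)) * ∑ j, (inner ℝ g (k (zq j)) : ℝ)
        + lam * (∑ i, αs i * (inner ℝ g (k (zp i)) : ℝ) + ∑ j, βs j * (inner ℝ g (k (zq j)) : ℝ))
        = (∑ i, ((1 / (np:ℝ)) * ((Kp *ᵥ αs) i + (Kpq *ᵥ βs) i) + lam * αs i)
            * (inner ℝ g (k (zp i)) : ℝ))
          + ∑ j, (lam * βs j - 1 / (nq:ℝ)) * (inner ℝ g (k (zq j)) : ℝ) := by
      rw [← e1, ← e2]; ring
    rw [this]
    rw [Finset.sum_eq_zero fun i _ => by rw [hstat i, zero_mul],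
        Finset.sum_eq_zero fun j _ => by rw [hcoefq j, zero_mul], add_zero]
  -- main argument
  intro f hf
  set g : H := f - rstar with hg
  have hg0 : g ≠ 0 := sub_ne_zero.2 hf
  have hf' : f = rstar + g := by rw [hg]; abel
  have e1 : ∑ i, (inner ℝ f (k (zp i)) : ℝ) ^ 2
      = ∑ i, (inner ℝ rstar (k (zp i)) : ℝ) ^ 2
        + 2 * ∑ i, (inner ℝ rstar (k (zp i)) : ℝ) * (inner ℝ g (k (zp i)) : ℝ)
        + ∑ i, (inner ℝ g (k (zp i)) : ℝ) ^ 2 := by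
    rw [Finset.mul_sum, ← Finset.sum_add_distrib, ← Finset.sum_add_distrib]
    refine Finset.sum_congr rfl fun i _ => ?_
    rw [hf', inner_add_left]; ring
  have e2 : ∑ j, (inner ℝ f (k (zq j)) : ℝ)
      = ∑ j, (inner ℝ rstar (k (zq j)) : ℝ) + ∑ j, (inner ℝ g (k (zq j)) : ℝ) := by
    rw [← Finset.sum_add_distrib]
    refine Finset.sum_congr rfl fun j _ => ?_
    rw [hf', inner_add_left]
  have e3 : ‖f‖ ^ 2 = ‖rstar‖ ^ 2 + 2 * (inner ℝ rstar g : ℝ) + ‖g‖ ^ 2 := by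
    rw [hf']; exact norm_add_sq_real rstar g
  have key : F f - F rstar
      = (1 / (2 * (np:ℝ))) * ∑ i, (inner ℝ g (k (zp i)) : ℝ) ^ 2 + (lam / 2) * ‖g‖ ^ 2 := by
    rw [hF f, hF rstar, hJ f, hJ rstar, e1, e2, e3]
    linear_combination hL g
  have hpos : 0 < (1 / (2 * (np:ℝ))) * ∑ i, (inner ℝ g (k (zp i)) : ℝ) ^ 2
      + (lam / 2) * ‖g‖ ^ 2 := by
    have h1 : 0 ≤ ∑ i, (inner ℝ g (k (zp i)) : ℝ) ^ 2 :=
      Finset.sum_nonneg fun i _ => sq_nonneg _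
    have h2 : 0 < ‖g‖ := norm_pos_iff.2 hg0
    positivity
  linarith [key, hpos]
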